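/- Let f : Fin m → Fin 2 represent a number N(f) < 2^m − 1 (so some bit is 0). Define g : Fin m → Fin 2 by: g(i) = 1 − f(i) if all bits f(j) with j < i are 1 (including i = 0), and g(i) = f(i) if some bit f(j) with j < i is 0. Then N(g) = N(f) + 1. -/

import Mathlib

def binVal (m : ℕ) (f : Fin m → Fin 2) : ℕ := ∑ i : Fin m, (f i : ℕ) * 2 ^ (i : ℕ)

lemma pow2sum (k : ℕ) : ∑ i ∈ Finset.range k, 2 ^ i = 2 ^ k - 1 := by
  induction k with
  | zero => simp
  | succ n ih =>
    rw [Finset.sum_range_succ, ih]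
    have : 1 ≤ 2 ^ n := Nat.one_le_two_pow
    ring_nf
    omega

theorem succ_correct (m : ℕ) (f g : Fin m → Fin 2)
    (hlt : binVal m f < 2 ^ m - 1)
    (hflip : ∀ i : Fin m, (∀ j : Fin m, j < i → f j = 1) → (g i : ℕ) = 1 - (f i : ℕ))
    (hkeep : ∀ i : Fin m, (∃ j : Fin m, j < i ∧ f j = 0) → g i = f i) :
    binVal m g = binVal m f + 1 := by
  have two01 : ∀ x : Fin 2, x ≠ 0 → x = 1 := by decide
  -- existence of a zero bit
  have hex : ∃ n : ℕ, ∃ h : n < m, f ⟨n, h⟩ = 0 := by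
    by_contra hc
    push_neg at hc
    have hall : ∀ i : Fin m, f i = 1 := fun i => two01 _ (hc i.val i.isLt)
    have : binVal m f = 2 ^ m - 1 := by
      unfold binVal
      simp only [hall]
      rw [show (∑ i : Fin m, ((1 : Fin 2) : ℕ) * 2 ^ (i : ℕ))
          = ∑ i : Fin m, 2 ^ (i : ℕ) by simp]
      rw [Fin.sum_univ_eq_sum_range (fun n => 2 ^ n) m, pow2sum]
    omega
  classical
  obtain ⟨k, hkspec, hkmin'⟩ :
      ∃ k, (∃ h : k < m, f ⟨k, h⟩ = 0) ∧ ∀ j, j < k → ¬∃ h : j < m, f ⟨j, h⟩ = 0 :=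
    ⟨Nat.find hex, Nat.find_spec hex, fun j hj => Nat.find_min hex hj⟩
  obtain ⟨hkm, hk0⟩ := hkspec
  have hkmin : ∀ j : Fin m, (j : ℕ) < k → f j = 1 := by
    intro j hj
    have := hkmin' j hj
    push_neg at this
    exact two01 _ (this j.isLt)
  set K : Fin m := ⟨k, hkm⟩ with hK
  -- values of g
  have hgK : (g K : ℕ) = 1 := by
    rw [hflip K (fun j hj => hkmin j hj)]
    rw [hk0]; simp
  have hglt : ∀ i : Fin m, (i : ℕ) < k → (g i : ℕ) = 0 := by
    intro i hi
    rw [hflip i (fun j hj => hkmin j (lt_trans hj hi)), hkmin i hi]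
    decide
  have hggt : ∀ i : Fin m, k < (i : ℕ) → g i = f i := by
    intro i hi
    exact hkeep i ⟨K, hi, hk0⟩
  -- pointwise identity
  have hpt : ∀ i : Fin m,
      (g i : ℕ) * 2 ^ (i : ℕ) + (if (i : ℕ) < k then 2 ^ (i : ℕ) else 0)
      = (f i : ℕ) * 2 ^ (i : ℕ) + (if (i : ℕ) = k then 2 ^ k else 0) := by
    intro i
    rcases lt_trichotomy (i : ℕ) k with h | h | h
    · rw [hglt i h, hkmin i h, if_pos h, if_neg (by omega)]
      simp
    · have hiK : i = K := Fin.ext h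
      rw [hiK, hgK, if_neg (by omega), if_pos rfl]
      rw [hk0]; simp [hK]
    · rw [hggt i h, if_neg (by omega), if_neg (by omega)]
  have hsum := Finset.sum_congr rfl (fun i (_ : i ∈ Finset.univ) => hpt i)
  rw [Finset.sum_add_distrib, Finset.sum_add_distrib] at hsum
  have hS1 : (∑ i : Fin m, if (i : ℕ) < k then 2 ^ (i : ℕ) else 0) = 2 ^ k - 1 := by
    rw [Fin.sum_univ_eq_sum_range (fun n => if n < k then 2 ^ n else 0) m]
    have hdisj : Disjoint (Finset.range k)
        ((Finset.range (m - k)).map (addLeftEmbedding k)) := by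
      rw [Finset.disjoint_left]
      intro a ha hb
      simp only [Finset.mem_range] at ha
      simp only [Finset.mem_map, Finset.mem_range, addLeftEmbedding_apply] at hb
      obtain ⟨b, _, rfl⟩ := hb
      omega
    rw [show m = k + (m - k) by omega, Finset.range_add, Finset.sum_union hdisj]
    rw [Finset.sum_map]
    simp only [Finset.mem_range, addLeftEmbedding_apply]
    rw [Finset.sum_congr rfl (fun x hx => if_pos (Finset.mem_range.mp hx)),
        Finset.sum_congr rfl (fun x _ => if_neg (by omega)), pow2sum]
    simp
  have hS2 : (∑ i : Fin m, if (i : ℕ) = k then 2 ^ k else 0) = 2 ^ k := by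
    have heach : ∀ i : Fin m, (if (i : ℕ) = k then (2:ℕ) ^ k else 0)
        = (if i = K then 2 ^ k else 0) := by
      intro i
      by_cases h1 : (i : ℕ) = k
      · rw [if_pos h1, if_pos (Fin.ext h1)]
      · rw [if_neg h1, if_neg (fun h => h1 (by rw [h]))]
    rw [Finset.sum_congr rfl (fun i _ => heach i),
        Finset.sum_ite_eq' Finset.univ K (fun _ => 2 ^ k), if_pos (Finset.mem_univ K)]
  rw [hS1, hS2] at hsum
  have h1 : 1 ≤ 2 ^ k := Nat.one_le_two_pow
  unfold binVal
  omega
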